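/- Discrete Crum theorem: Let k ≥ 1, V_0 : ℤ → ℝ, and let ψ_1, …, ψ_k : ℤ → ℝ satisfy −Δ²ψ_i(n) + V_0(n)ψ_i(n) = ε_i ψ_i(n+2) for all n ∈ ℤ, for constants ε_1, …, ε_k ∈ ℝ. For 1 ≤ j ≤ k let C_j(n) denote the Casoratian of ψ_1, …, ψ_j, i.e. the determinant of the j×j matrix whose (l, m) entry is ψ_m(n+l) for 0 ≤ l ≤ j−1, 1 ≤ m ≤ j, and set C_0(n) = 1; assume C_j(n) ≠ 0 for all n ∈ ℤ and all 1 ≤ j ≤ k. Define f_j(n) = (C_{j−1}(n) C_j(n+1)) / (C_{j−1}(n+1) C_j(n)) − 1 for 1 ≤ j ≤ k, and define V_i(n) = V_0(n+i) − 2Δ(f_1(n+i) + f_2(n+i−1) + ⋯ + f_i(n+1)) for 1 ≤ i ≤ k (with V_0 the given potential for i = 0). Then for each 1 ≤ i ≤ k the sequence ψ̂_i(n) = (−1)^{i−1} C_i(n)/C_{i−1}(n) satisfies −Δ²ψ̂_i(n) + V_{i−1}(n)ψ̂_i(n) = ε_i ψ̂_i(n+2) for all n ∈ ℤ. Moreover,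 V_i(n) = V_0(n+i) − 2Δ(D_i(n+1)/C_i(n+1)), where D_i(n) is the determinant of the i×i matrix whose first i−1 rows are (ψ_1(n+l), …, ψ_i(n+l)) for l = 0, 1, …, i−2 and whose last row is (ψ_1(n+i), …, ψ_i(n+i)). -/

import Mathlib

lemma dj_aux {N : ℕ} (M : Matrix (Fin N) (Fin N) ℝ) (hM : M.det ≠ 0)
    (P : Matrix (Fin N) (Fin 2) ℝ) (Q : Matrix (Fin 2) (Fin N) ℝ)
    (R : Matrix (Fin 2) (Fin 2) ℝ) :
    (Matrix.fromBlocks M P Q R).det * M.det =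
      (Matrix.fromBlocks M (Matrix.of fun a (_ : Fin 1) => P a 0)
          (Matrix.of fun (_ : Fin 1) a => Q 0 a) (Matrix.of fun _ _ => R 0 0)).det *
      (Matrix.fromBlocks M (Matrix.of fun a (_ : Fin 1) => P a 1)
          (Matrix.of fun (_ : Fin 1) a => Q 1 a) (Matrix.of fun _ _ => R 1 1)).det -
      (Matrix.fromBlocks M (Matrix.of fun a (_ : Fin 1) => P a 1)
          (Matrix.of fun (_ : Fin 1) a => Q 0 a) (Matrix.of fun _ _ => R 0 1)).det *
      (Matrix.fromBlocks M (Matrix.of fun a (_ : Fin 1) => P a 0)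
          (Matrix.of fun (_ : Fin 1) a => Q 1 a) (Matrix.of fun _ _ => R 1 0)).det := by
  have : Invertible M := M.invertibleOfIsUnitDet (isUnit_iff_ne_zero.mpr hM)
  rw [Matrix.det_fromBlocks₁₁, Matrix.det_fromBlocks₁₁, Matrix.det_fromBlocks₁₁,
    Matrix.det_fromBlocks₁₁, Matrix.det_fromBlocks₁₁]
  have key : ∀ s t : Fin 2,
      (Matrix.of (fun _ _ => R s t) - Matrix.of (fun (_ : Fin 1) a => Q s a) * ⅟M *
        Matrix.of (fun a (_ : Fin 1) => P a t)).det = (R - Q * ⅟M * P) s t := by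
    intro s t
    rw [Matrix.det_fin_one]
    simp [Matrix.mul_apply, Matrix.sub_apply]
  rw [key, key, key, key, Matrix.det_fin_two]
  ring

lemma det_perm_reindex {m p : Type*} [DecidableEq m] [Fintype m] [DecidableEq p] [Fintype p]
    (e : p ≃ m) (σ : Equiv.Perm m) (A : Matrix m m ℝ) :
    Matrix.det (Matrix.of fun i j => A (σ (e i)) (e j)) = (Equiv.Perm.sign σ : ℤ) * A.det := by
  have h : (Matrix.of fun i j => A (σ (e i)) (e j)) = (A.submatrix σ id).submatrix e e := rfl
  rw [h, Matrix.det_submatrix_equiv_self, Matrix.det_permute]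

lemma det_reindex_self {m p : Type*} [DecidableEq m] [Fintype m] [DecidableEq p] [Fintype p]
    (e : p ≃ m) (A : Matrix m m ℝ) :
    Matrix.det (Matrix.of fun i j => A (e i) (e j)) = A.det := by
  have h : (Matrix.of fun i j => A (e i) (e j)) = A.submatrix e e := rfl
  rw [h, Matrix.det_submatrix_equiv_self]

lemma dj (N : ℕ) (a : ℕ → ℕ → ℝ)
    (h : Matrix.det (Matrix.of fun l m : Fin N => a ((l:ℕ)+1) (m:ℕ)) ≠ 0) :
    Matrix.det (Matrix.of fun l m : Fin (N+2) => a (l:ℕ) (m:ℕ)) *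
      Matrix.det (Matrix.of fun l m : Fin N => a ((l:ℕ)+1) (m:ℕ))
    = Matrix.det (Matrix.of fun l m : Fin (N+1) => a (l:ℕ) (m:ℕ)) *
        Matrix.det (Matrix.of fun l m : Fin (N+1) =>
          a ((l:ℕ)+1) (if (m:ℕ) = N then N+1 else (m:ℕ)))
      - Matrix.det (Matrix.of fun l m : Fin (N+1) =>
          a (l:ℕ) (if (m:ℕ) = N then N+1 else (m:ℕ))) *
        Matrix.det (Matrix.of fun l m : Fin (N+1) => a ((l:ℕ)+1) (m:ℕ)) := by
  classical
  set M : Matrix (Fin N) (Fin N) ℝ := Matrix.of fun l m => a ((l:ℕ)+1) (m:ℕ) with hMdef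
  set P : Matrix (Fin N) (Fin 2) ℝ := Matrix.of fun l t => a ((l:ℕ)+1) (N+(t:ℕ)) with hPdef
  set Q : Matrix (Fin 2) (Fin N) ℝ :=
    Matrix.of fun s m => a (if s = 0 then 0 else N+1) (m:ℕ) with hQdef
  set R : Matrix (Fin 2) (Fin 2) ℝ :=
    Matrix.of fun s t => a (if s = 0 then 0 else N+1) (N+(t:ℕ)) with hRdef
  have hσ : ∀ x : Fin (N+2), ((Fin.cycleRange (⟨N, by omega⟩ : Fin (N+2)) x : Fin (N+2)) : ℕ)
      = if (x:ℕ) < N then (x:ℕ)+1 else if (x:ℕ) = N then 0 else (x:ℕ) := by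
    intro x
    rcases lt_trichotomy (x:ℕ) N with hx | hx | hx
    · rw [if_pos hx, Fin.coe_cycleRange_of_lt (by simpa [Fin.lt_def] using hx)]
    · rw [if_neg (by omega), if_pos hx]
      have hx' : x = ⟨N, by omega⟩ := Fin.ext hx
      rw [hx', Fin.cycleRange_self]; rfl
    · rw [if_neg (by omega), if_neg (by omega),
        Fin.cycleRange_of_gt (by simpa [Fin.lt_def] using hx)]
  have hσ' : ∀ x : Fin (N+1), ((Fin.cycleRange (Fin.last N) x : Fin (N+1)) : ℕ)
      = if (x:ℕ) < N then (x:ℕ)+1 else 0 := by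
    intro x
    rcases lt_or_eq_of_le (Nat.lt_succ_iff.mp x.isLt) with hx | hx
    · rw [if_pos hx, Fin.coe_cycleRange_of_lt (by simpa [Fin.lt_def] using hx)]
    · rw [if_neg (by omega)]
      have hx' : x = Fin.last N := Fin.ext (by simpa using hx)
      rw [hx', Fin.cycleRange_self]; rfl
  -- big matrix
  have ebig : (Matrix.fromBlocks M P Q R).det
      = ((-1:ℝ))^N * Matrix.det (Matrix.of fun l m : Fin (N+2) => a (l:ℕ) (m:ℕ)) := by
    have hmat : Matrix.fromBlocks M P Q R = Matrix.of fun i j =>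
        (Matrix.of fun l m : Fin (N+2) => a (l:ℕ) (m:ℕ))
          ((Fin.cycleRange (⟨N, by omega⟩ : Fin (N+2))) (finSumFinEquiv i)) (finSumFinEquiv j) := by
      funext i j
      rcases i with l | s <;> rcases j with m | t
      · have hl := l.isLt
        simp only [Matrix.fromBlocks_apply₁₁, Matrix.of_apply, finSumFinEquiv_apply_left, hσ,
          Fin.coe_castAdd, hMdef]
        simp only [hl, ↓reduceIte]
      · have hl := l.isLt
        simp only [Matrix.fromBlocks_apply₁₂, Matrix.of_apply, finSumFinEquiv_apply_left,
          finSumFinEquiv_apply_right, hσ, Fin.coe_castAdd, Fin.coe_natAdd, hPdef]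
        simp only [hl, ↓reduceIte]
      · have hs := s.isLt
        simp only [Matrix.fromBlocks_apply₂₁, Matrix.of_apply, finSumFinEquiv_apply_left,
          finSumFinEquiv_apply_right, hσ, Fin.coe_castAdd, Fin.coe_natAdd, hQdef]
        fin_cases s
        · simp
        · norm_num
      · simp only [Matrix.fromBlocks_apply₂₂, Matrix.of_apply,
          finSumFinEquiv_apply_right, hσ, Fin.coe_natAdd, hRdef]
        fin_cases s
        · simp
        · norm_num
    rw [hmat, det_perm_reindex, Fin.sign_cycleRange]
    norm_num
  have eS0 : ∀ (t : Fin 2) (c : ℕ → ℕ), (∀ x, x < N → c x = x) → c N = N + (t:ℕ) →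
      (Matrix.fromBlocks M (Matrix.of fun b (_:Fin 1) => P b t)
          (Matrix.of fun (_:Fin 1) b => Q 0 b) (Matrix.of fun _ _ => R 0 t)).det
        = ((-1:ℝ))^N * Matrix.det (Matrix.of fun l m : Fin (N+1) => a (l:ℕ) (c (m:ℕ))) := by
    intro t c hc hcN
    have hmat : (Matrix.fromBlocks M (Matrix.of fun b (_:Fin 1) => P b t)
          (Matrix.of fun (_:Fin 1) b => Q 0 b) (Matrix.of fun _ _ => R 0 t))
        = Matrix.of fun i j => (Matrix.of fun l m : Fin (N+1) => a (l:ℕ) (c (m:ℕ)))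
            ((Fin.cycleRange (Fin.last N)) (finSumFinEquiv i)) (finSumFinEquiv j) := by
      funext i j
      rcases i with l | s <;> rcases j with m | t1
      · have hl := l.isLt
        have hm := m.isLt
        simp only [Matrix.fromBlocks_apply₁₁, Matrix.of_apply, finSumFinEquiv_apply_left, hσ',
          Fin.coe_castAdd, hMdef]
        simp only [hl, ↓reduceIte]
        rw [hc _ hm]
      · have hl := l.isLt
        simp only [Matrix.fromBlocks_apply₁₂, Matrix.of_apply, finSumFinEquiv_apply_left,
          finSumFinEquiv_apply_right, hσ', Fin.coe_castAdd, Fin.coe_natAdd, hPdef]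
        simp only [hl, ↓reduceIte]
        have ht1 : (t1:ℕ) = 0 := by omega
        simp [ht1, hcN]

      · have hm := m.isLt
        simp only [Matrix.fromBlocks_apply₂₁, Matrix.of_apply, finSumFinEquiv_apply_left,
          finSumFinEquiv_apply_right, hσ', Fin.coe_castAdd, Fin.coe_natAdd, hQdef]
        have hs : (s:ℕ) = 0 := by omega
        simp [hs, hc _ hm]
      · simp only [Matrix.fromBlocks_apply₂₂, Matrix.of_apply,
          finSumFinEquiv_apply_right, hσ', Fin.coe_natAdd, hRdef]
        have hs : (s:ℕ) = 0 := by omega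
        have ht1 : (t1:ℕ) = 0 := by omega
        simp [hs, ht1, hcN]
    rw [hmat, det_perm_reindex, Fin.sign_cycleRange]
    norm_num
  have eS1 : ∀ (t : Fin 2) (c : ℕ → ℕ), (∀ x, x < N → c x = x) → c N = N + (t:ℕ) →
      (Matrix.fromBlocks M (Matrix.of fun b (_:Fin 1) => P b t)
          (Matrix.of fun (_:Fin 1) b => Q 1 b) (Matrix.of fun _ _ => R 1 t)).det
        = Matrix.det (Matrix.of fun l m : Fin (N+1) => a ((l:ℕ)+1) (c (m:ℕ))) := by
    intro t c hc hcN
    have hmat : (Matrix.fromBlocks M (Matrix.of fun b (_:Fin 1) => P b t)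
          (Matrix.of fun (_:Fin 1) b => Q 1 b) (Matrix.of fun _ _ => R 1 t))
        = Matrix.of fun i j => (Matrix.of fun l m : Fin (N+1) => a ((l:ℕ)+1) (c (m:ℕ)))
            (finSumFinEquiv i) (finSumFinEquiv j) := by
      funext i j
      rcases i with l | s <;> rcases j with m | t1
      · have hm := m.isLt
        simp only [Matrix.fromBlocks_apply₁₁, Matrix.of_apply, finSumFinEquiv_apply_left,
          Fin.coe_castAdd, hMdef]
        rw [hc _ hm]
      · simp only [Matrix.fromBlocks_apply₁₂, Matrix.of_apply, finSumFinEquiv_apply_left,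
          finSumFinEquiv_apply_right, Fin.coe_castAdd, Fin.coe_natAdd, hPdef]
        have ht1 : (t1:ℕ) = 0 := by omega
        simp [ht1, hcN]
      · have hm := m.isLt
        simp only [Matrix.fromBlocks_apply₂₁, Matrix.of_apply, finSumFinEquiv_apply_left,
          finSumFinEquiv_apply_right, Fin.coe_castAdd, Fin.coe_natAdd, hQdef]
        have hs : (s:ℕ) = 0 := by omega
        norm_num [hs, hc _ hm]
      · simp only [Matrix.fromBlocks_apply₂₂, Matrix.of_apply,
          finSumFinEquiv_apply_right, Fin.coe_natAdd, hRdef]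
        have hs : (s:ℕ) = 0 := by omega
        have ht1 : (t1:ℕ) = 0 := by omega
        norm_num [hs, ht1, hcN]
    rw [hmat, det_reindex_self]
  have H := dj_aux M h P Q R
  rw [ebig,
    eS0 0 (fun x => x) (fun _ _ => rfl) (by simp),
    eS0 1 (fun x => if x = N then N+1 else x) (fun x hx => if_neg (Nat.ne_of_lt hx)) (by simp),
    eS1 0 (fun x => x) (fun _ _ => rfl) (by simp),
    eS1 1 (fun x => if x = N then N+1 else x) (fun x hx => if_neg (Nat.ne_of_lt hx)) (by simp)]
    at H
  -- (no beta reduction needed)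
  refine mul_left_cancel₀ (pow_ne_zero N (by norm_num : (-1:ℝ) ≠ 0)) ?_
  linear_combination H


lemma det_ind (r : ℕ) (a : ℕ → ℕ → ℝ) (p : ℕ) (hp : p ≤ r)
    (hcol : ∀ l : Fin (r+1), a (l:ℕ) r = if (l:ℕ) = p then 1 else 0) :
    Matrix.det (Matrix.of fun l m : Fin (r+1) => a (l:ℕ) (m:ℕ))
      = (-1)^(p+r) * Matrix.det (Matrix.of fun l m : Fin r =>
          a (if (l:ℕ) < p then (l:ℕ) else (l:ℕ)+1) (m:ℕ)) := by
  rw [Matrix.det_succ_column _ (Fin.last r)]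
  rw [Finset.sum_eq_single (⟨p, by omega⟩ : Fin (r+1))]
  · have hent : (Matrix.of fun l m : Fin (r+1) => a (l:ℕ) (m:ℕ)) ⟨p, by omega⟩ (Fin.last r)
        = 1 := by
      have := hcol ⟨p, by omega⟩
      simp only [Matrix.of_apply, Fin.val_last] at *
      simpa using this
    have hsub : ((Matrix.of fun l m : Fin (r+1) => a (l:ℕ) (m:ℕ)).submatrix
        (⟨p, by omega⟩ : Fin (r+1)).succAbove (Fin.last r).succAbove)
        = (Matrix.of fun l m : Fin r => a (if (l:ℕ) < p then (l:ℕ) else (l:ℕ)+1) (m:ℕ)) := by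
      funext l m
      simp only [Matrix.submatrix_apply, Matrix.of_apply, Fin.succAbove_last, Fin.coe_castSucc]
      rcases lt_or_ge (l:ℕ) p with hl | hl
      · rw [Fin.succAbove_of_castSucc_lt _ _ (by simp [Fin.lt_def, hl]), if_pos hl,
          Fin.coe_castSucc]
      · rw [Fin.succAbove_of_le_castSucc _ _ (by simp [Fin.le_def, hl]), if_neg (by omega),
          Fin.val_succ]
    rw [hent, hsub]
    show ((-1:ℝ))^((p:ℕ) + (Fin.last r : ℕ)) * 1 * _ = _
    rw [Fin.val_last]
    ring
  · intro b _ hb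
    have hbp : (b:ℕ) ≠ p := fun h => hb (Fin.ext h)
    have : (Matrix.of fun l m : Fin (r+1) => a (l:ℕ) (m:ℕ)) b (Fin.last r) = 0 := by
      have := hcol b
      simp only [Matrix.of_apply, Fin.val_last] at *
      simpa [hbp] using this
    rw [this]
    ring
  · intro h
    exact absurd (Finset.mem_univ _) h


lemma darboux_step (W0 W1 e e' u0 u1 u2 u3 p0 p1 p2 p3 : ℝ)
    (hu0 : u0 ≠ 0) (hu1 : u1 ≠ 0) (hu2 : u2 ≠ 0)
    (hU0 : -(u2 - 2*u1 + u0) + W0*u0 = e' * u2)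
    (hU1 : -(u3 - 2*u2 + u1) + W1*u1 = e' * u3)
    (hP0 : -(p2 - 2*p1 + p0) + W0*p0 = e * p2)
    (hP1 : -(p3 - 2*p2 + p1) + W1*p1 = e * p3) :
    -((p3 - u3/u2*p2) - 2*(p2 - u2/u1*p1) + (p1 - u1/u0*p0))
      + (W1 - 2*(u3/u2 - u2/u1)) * (p1 - u1/u0*p0)
    = e * (p3 - u3/u2*p2) := by
  have key : -(u0*u1*(u2*p3 - u3*p2) - 2*(u0*u2*(u1*p2 - u2*p1)) + u1*u2*(u0*p1 - u1*p0))
      + (W1*u1*u2 - 2*(u1*u3) + 2*u2^2)*(u0*p1 - u1*p0)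
      = e * (u0*u1*(u2*p3 - u3*p2)) := by
    linear_combination (-(u1*u3*u0)) * hP0 + (u1*u3*p0) * hU0 + (u0*u2*u1) * hP1
      - (u1*u2*p0) * hU1
  have hL : -((p3 - u3/u2*p2) - 2*(p2 - u2/u1*p1) + (p1 - u1/u0*p0))
      + (W1 - 2*(u3/u2 - u2/u1)) * (p1 - u1/u0*p0)
      = (-(u0*u1*(u2*p3 - u3*p2) - 2*(u0*u2*(u1*p2 - u2*p1)) + u1*u2*(u0*p1 - u1*p0))
      + (W1*u1*u2 - 2*(u1*u3) + 2*u2^2)*(u0*p1 - u1*p0)) / (u0*u1*u2) := by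
    field_simp
    ring
  have hR : e * (p3 - u3/u2*p2) = (e * (u0*u1*(u2*p3 - u3*p2))) / (u0*u1*u2) := by
    field_simp
  rw [hL, hR, key]

noncomputable def CCd (ψ : ℕ → ℤ → ℝ) (j : ℕ) (n : ℤ) : ℝ :=
  Matrix.det (fun l m : Fin j => ψ ((m : ℕ) + 1) (n + ((l : ℕ) : ℤ)))

noncomputable def WWd (ψ : ℕ → ℤ → ℝ) (j : ℕ) (φ : ℤ → ℝ) (n : ℤ) : ℝ :=
  Matrix.det (fun l m : Fin (j+1) =>
    if (m : ℕ) < j then ψ ((m : ℕ) + 1) (n + ((l : ℕ) : ℤ)) else φ (n + ((l : ℕ) : ℤ)))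

noncomputable def DDd (ψ : ℕ → ℤ → ℝ) (i : ℕ) (n : ℤ) : ℝ :=
  Matrix.det (fun l m : Fin i =>
    ψ ((m : ℕ) + 1) (n + (if (l : ℕ) = i - 1 then (i : ℤ) else ((l : ℕ) : ℤ))))


lemma cc_zero (ψ : ℕ → ℤ → ℝ) (n : ℤ) : CCd ψ 0 n = 1 := Matrix.det_fin_zero

lemma cc_one (ψ : ℕ → ℤ → ℝ) (n : ℤ) : CCd ψ 1 n = ψ 1 n := by
  unfold CCd
  refine (Matrix.det_fin_one _).trans ?_
  norm_num

lemma dd_one (ψ : ℕ → ℤ → ℝ) (n : ℤ) : DDd ψ 1 n = ψ 1 (n+1) := by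
  unfold DDd
  refine (Matrix.det_fin_one _).trans ?_
  norm_num

lemma ww_zero (ψ : ℕ → ℤ → ℝ) (φ : ℤ → ℝ) (n : ℤ) : WWd ψ 0 φ n = φ n := by
  unfold WWd
  refine (Matrix.det_fin_one _).trans ?_
  norm_num

lemma cc_succ (ψ : ℕ → ℤ → ℝ) (j : ℕ) (n : ℤ) : WWd ψ j (ψ (j+1)) n = CCd ψ (j+1) n := by
  unfold WWd CCd
  congr 1
  funext l m
  by_cases hm : (m:ℕ) < j
  · rw [if_pos hm]
  · rw [if_neg hm]
    have hmj : (m:ℕ) = j := by omega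
    rw [hmj]

lemma ww_rec (ψ : ℕ → ℤ → ℝ) (j : ℕ) (φ : ℤ → ℝ) (n : ℤ)
    (h : CCd ψ j (n+1) ≠ 0) :
    WWd ψ (j+1) φ n * CCd ψ j (n+1)
      = CCd ψ (j+1) n * WWd ψ j φ (n+1) - WWd ψ j φ n * CCd ψ (j+1) (n+1) := by
  set a : ℕ → ℕ → ℝ := fun l m =>
    if m < j+1 then ψ (m+1) (n + (l:ℤ)) else φ (n + (l:ℤ)) with ha
  have eint : Matrix.det (Matrix.of fun l m : Fin j => a ((l:ℕ)+1) (m:ℕ)) = CCd ψ j (n+1) := by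
    unfold CCd; congr 1; funext l m
    simp only [Matrix.of_apply, ha]
    rw [if_pos (by omega)]
    congr 1; push_cast; ring
  have ebig : Matrix.det (Matrix.of fun l m : Fin (j+2) => a (l:ℕ) (m:ℕ))
      = WWd ψ (j+1) φ n := by
    unfold WWd; congr 1
  have e00 : Matrix.det (Matrix.of fun l m : Fin (j+1) => a (l:ℕ) (m:ℕ)) = CCd ψ (j+1) n := by
    unfold CCd; congr 1; funext l m
    simp only [Matrix.of_apply, ha]
    rw [if_pos (by omega)]
  have e10 : Matrix.det (Matrix.of fun l m : Fin (j+1) => a ((l:ℕ)+1) (m:ℕ))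
      = CCd ψ (j+1) (n+1) := by
    unfold CCd; congr 1; funext l m
    simp only [Matrix.of_apply, ha]
    rw [if_pos (by omega)]
    congr 1; push_cast; ring
  have e01 : Matrix.det (Matrix.of fun l m : Fin (j+1) =>
      a (l:ℕ) (if (m:ℕ) = j then j+1 else (m:ℕ))) = WWd ψ j φ n := by
    unfold WWd; congr 1; funext l m
    simp only [Matrix.of_apply, ha]
    by_cases hm : (m:ℕ) = j
    · rw [if_pos hm, if_neg (by omega), if_neg (by omega)]
    · rw [if_neg hm, if_pos (by omega), if_pos (by omega)]
  have e11 : Matrix.det (Matrix.of fun l m : Fin (j+1) =>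
      a ((l:ℕ)+1) (if (m:ℕ) = j then j+1 else (m:ℕ))) = WWd ψ j φ (n+1) := by
    unfold WWd; congr 1; funext l m
    simp only [Matrix.of_apply, ha]
    by_cases hm : (m:ℕ) = j
    · rw [if_pos hm, if_neg (by omega), if_neg (by omega)]
      congr 1; push_cast; ring
    · rw [if_neg hm, if_pos (by omega), if_pos (by omega)]
      congr 1; push_cast; ring
  have H := dj j a (by rw [eint]; exact h)
  rw [eint, ebig, e00, e10, e01, e11] at H
  linarith [H]

lemma star_eq (ψ : ℕ → ℤ → ℝ) (i : ℕ) (hi : 1 ≤ i) (n : ℤ)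
    (h : CCd ψ i (n+1) ≠ 0) :
    DDd ψ (i+1) n * CCd ψ i (n+1)
      = CCd ψ (i+1) n * DDd ψ i (n+1) + CCd ψ i n * CCd ψ (i+1) (n+1) := by
  set a : ℕ → ℕ → ℝ := fun l m =>
    if m < i+1 then ψ (m+1) (n + (l:ℤ)) else (if l = i then (1:ℝ) else 0) with ha
  have eint : Matrix.det (Matrix.of fun l m : Fin i => a ((l:ℕ)+1) (m:ℕ)) = CCd ψ i (n+1) := by
    unfold CCd; congr 1; funext l m
    simp only [Matrix.of_apply, ha]
    rw [if_pos (by omega)]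
    congr 1; push_cast; ring
  have e00 : Matrix.det (Matrix.of fun l m : Fin (i+1) => a (l:ℕ) (m:ℕ)) = CCd ψ (i+1) n := by
    unfold CCd; congr 1; funext l m
    simp only [Matrix.of_apply, ha]
    rw [if_pos (by omega)]
  have e10 : Matrix.det (Matrix.of fun l m : Fin (i+1) => a ((l:ℕ)+1) (m:ℕ))
      = CCd ψ (i+1) (n+1) := by
    unfold CCd; congr 1; funext l m
    simp only [Matrix.of_apply, ha]
    rw [if_pos (by omega)]
    congr 1; push_cast; ring
  have hind : ∀ lv : ℕ, a lv (i+1) = if lv = i then (1:ℝ) else 0 := by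
    intro lv
    simp only [ha]
    rw [if_neg (by omega)]
  have ebig : Matrix.det (Matrix.of fun l m : Fin (i+2) => a (l:ℕ) (m:ℕ))
      = -(DDd ψ (i+1) n) := by
    rw [det_ind (i+1) a i (by omega) (fun l => hind (l:ℕ))]
    have hdet : Matrix.det (Matrix.of fun l m : Fin (i+1) =>
        a (if (l:ℕ) < i then (l:ℕ) else (l:ℕ)+1) (m:ℕ)) = DDd ψ (i+1) n := by
      unfold DDd; congr 1; funext l m
      simp only [Matrix.of_apply, ha]
      by_cases hl : (l:ℕ) < i
      · rw [if_pos hl, if_pos (by omega)]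
        congr 1
        rw [if_neg (by omega)]
      · rw [if_neg hl, if_pos (by omega)]
        congr 1
        rw [if_pos (by omega)]
        push_cast
        omega
    rw [hdet, Odd.neg_one_pow ⟨i, by ring⟩]
    ring
  have e01 : Matrix.det (Matrix.of fun l m : Fin (i+1) =>
      a (l:ℕ) (if (m:ℕ) = i then i+1 else (m:ℕ))) = CCd ψ i n := by
    have h2 := det_ind i (fun l m => a l (if m = i then i+1 else m)) i le_rfl (by
      intro l
      show a (l:ℕ) (if i = i then i+1 else i) = _
      rw [if_pos rfl, hind])
    beta_reduce at h2
    rw [h2, Even.neg_one_pow ⟨i, rfl⟩, one_mul]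
    unfold CCd; congr 1; funext l m
    simp only [Matrix.of_apply, ha]
    rw [if_neg (show ¬((m:ℕ) = i) by omega), if_pos (by omega), if_pos l.isLt]
  have e11 : Matrix.det (Matrix.of fun l m : Fin (i+1) =>
      a ((l:ℕ)+1) (if (m:ℕ) = i then i+1 else (m:ℕ))) = -(DDd ψ i (n+1)) := by
    have h2 := det_ind i (fun l m => a (l+1) (if m = i then i+1 else m)) (i-1) (by omega) (by
      intro l
      show a ((l:ℕ)+1) (if i = i then i+1 else i) = _
      rw [if_pos rfl, hind]
      by_cases hl : (l:ℕ) = i-1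
      · rw [if_pos (by omega), if_pos hl]
      · rw [if_neg (by omega), if_neg hl])
    beta_reduce at h2
    rw [h2, Odd.neg_one_pow ⟨i-1, by omega⟩]
    have hdet : Matrix.det (Matrix.of fun l m : Fin i =>
        a ((if (l:ℕ) < i-1 then (l:ℕ) else (l:ℕ)+1)+1) (if (m:ℕ) = i then i+1 else (m:ℕ)))
        = DDd ψ i (n+1) := by
      unfold DDd; congr 1; funext l m
      simp only [Matrix.of_apply, ha]
      rw [if_neg (show ¬((m:ℕ) = i) by omega)]
      by_cases hl : (l:ℕ) < i-1
      · rw [if_pos hl, if_pos (by omega)]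
        congr 1
        rw [if_neg (by omega)]
        push_cast; ring
      · have hl' : (l:ℕ) = i-1 := by omega
        rw [if_neg hl, if_pos (by omega)]
        congr 1
        rw [if_pos hl']
        push_cast
        omega
    rw [hdet]
    ring
  have H := dj i a (by rw [eint]; exact h)
  rw [eint, e00, e10, e01, e11, ebig] at H
  linarith [H]




/-- discrete Crum theorem: Let ψ₁, …, ψ_k solve
−Δ²ψᵢ + V₀ψᵢ = εᵢψᵢ(·+2). Let Cⱼ(n) be the Casoratian (with C₀ = 1, the empty
determinant), assumed nowhere vanishing for 1 ≤ j ≤ k. With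
fⱼ(n) = Cⱼ₋₁(n)Cⱼ(n+1)/(Cⱼ₋₁(n+1)Cⱼ(n)) − 1 and
Vᵢ(n) = V₀(n+i) − 2Δ(f₁(n+i) + f₂(n+i−1) + ⋯ + fᵢ(n+1)), the functions
ψ̂ᵢ(n) = (−1)^{i−1} Cᵢ(n)/Cᵢ₋₁(n) satisfy −Δ²ψ̂ᵢ + Vᵢ₋₁ψ̂ᵢ = εᵢψ̂ᵢ(·+2), and
Vᵢ(n) = V₀(n+i) − 2Δ(Dᵢ(n+1)/Cᵢ(n+1)), where Dᵢ is the determinant with rows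
ψ_m(n), ψ_m(n+1), …, ψ_m(n+i−2), ψ_m(n+i). -/
theorem stmt_19 (k : ℕ) (hk : 1 ≤ k) (V0 : ℤ → ℝ)
    (ψ : ℕ → ℤ → ℝ) (ε : ℕ → ℝ)
    (hψ : ∀ i : ℕ, 1 ≤ i → i ≤ k → ∀ n : ℤ,
      -(ψ i (n+2) - 2 * ψ i (n+1) + ψ i n) + V0 n * ψ i n = ε i * ψ i (n+2))
    (C : ℕ → ℤ → ℝ)
    (hC : ∀ (j : ℕ) (n : ℤ),
      C j n = Matrix.det (fun l m : Fin j => ψ ((m : ℕ) + 1) (n + ((l : ℕ) : ℤ))))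
    (hCne : ∀ (j : ℕ), 1 ≤ j → j ≤ k → ∀ n : ℤ, C j n ≠ 0)
    (f : ℕ → ℤ → ℝ)
    (hf : ∀ (j : ℕ), 1 ≤ j → j ≤ k → ∀ n : ℤ,
      f j n = C (j-1) n * C j (n+1) / (C (j-1) (n+1) * C j n) - 1)
    (V : ℕ → ℤ → ℝ)
    (hV : ∀ (i : ℕ), i ≤ k → ∀ n : ℤ,
      V i n = V0 (n + (i : ℤ))
        - 2 * ((∑ j ∈ Finset.Icc 1 i, f j ((n+1) + (i : ℤ) + 1 - (j : ℤ)))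
             - (∑ j ∈ Finset.Icc 1 i, f j (n + (i : ℤ) + 1 - (j : ℤ))))) 
    (D : ℕ → ℤ → ℝ)
    (hD : ∀ (i : ℕ), 1 ≤ i → i ≤ k → ∀ n : ℤ,
      D i n = Matrix.det (fun l m : Fin i =>
        ψ ((m : ℕ) + 1) (n + (if (l : ℕ) = i - 1 then (i : ℤ) else ((l : ℕ) : ℤ)))))
    (ψh : ℕ → ℤ → ℝ)
    (hψh : ∀ (i : ℕ), 1 ≤ i → i ≤ k → ∀ n : ℤ,
      ψh i n = (-1 : ℝ) ^ (i - 1) * C i n / C (i-1) n) :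
    (∀ (i : ℕ), 1 ≤ i → i ≤ k → ∀ n : ℤ,
      -(ψh i (n+2) - 2 * ψh i (n+1) + ψh i n) + V (i-1) n * ψh i n
        = ε i * ψh i (n+2)) ∧
    (∀ (i : ℕ), 1 ≤ i → i ≤ k → ∀ n : ℤ,
      V i n = V0 (n + (i : ℤ))
        - 2 * (D i (n+2) / C i (n+2) - D i (n+1) / C i (n+1))) := by
  classical
  have hCC : ∀ j n, C j n = CCd ψ j n := fun j n => hC j n
  have hDDb : ∀ i, 1 ≤ i → i ≤ k → ∀ n, D i n = DDd ψ i n := fun i h1 h2 n => hD i h1 h2 n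
  have hCne' : ∀ j, 1 ≤ j → j ≤ k → ∀ n : ℤ, CCd ψ j n ≠ 0 := by
    intro j h1 h2 n
    rw [← hCC]
    exact hCne j h1 h2 n
  have hCne0 : ∀ j, j ≤ k → ∀ n : ℤ, CCd ψ j n ≠ 0 := by
    intro j hj n
    rcases Nat.eq_zero_or_pos j with h0 | h0
    · subst h0
      rw [cc_zero]
      norm_num
    · exact hCne' j h0 hj n
  have hVrec : ∀ i : ℕ, i + 1 ≤ k → ∀ n : ℤ,
      V (i+1) n = V i (n+1) - 2*(f (i+1) (n+2) - f (i+1) (n+1)) := by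
    intro i hik n
    rw [hV (i+1) hik n, hV i (by omega) (n+1)]
    rw [Finset.sum_Icc_succ_top (by omega : 1 ≤ i+1), Finset.sum_Icc_succ_top (by omega : 1 ≤ i+1)]
    have e1 : ∀ x : ℤ, x + ((i+1:ℕ):ℤ) + 1 - ((i+1:ℕ):ℤ) = x + 1 := by
      intro x; push_cast; ring
    rw [e1 (n+1), e1 n]
    have e2 : (∑ j ∈ Finset.Icc 1 i, f j ((n+1) + ((i+1:ℕ):ℤ) + 1 - (j:ℤ)))
        = ∑ j ∈ Finset.Icc 1 i, f j (((n+1)+1) + (i:ℤ) + 1 - (j:ℤ)) := by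
      refine Finset.sum_congr rfl fun j _ => ?_
      congr 1; push_cast; ring
    have e3 : (∑ j ∈ Finset.Icc 1 i, f j (n + ((i+1:ℕ):ℤ) + 1 - (j:ℤ)))
        = ∑ j ∈ Finset.Icc 1 i, f j ((n+1) + (i:ℤ) + 1 - (j:ℤ)) := by
      refine Finset.sum_congr rfl fun j _ => ?_
      congr 1; push_cast; ring
    rw [e2, e3, show n + ((i+1:ℕ):ℤ) = (n+1) + (i:ℤ) from by push_cast; ring,
      show ((n:ℤ)+1)+1 = n+2 from by ring]
    ring
  -- the key inductive Darboux/Crum step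
  have key : ∀ j, j < k → ∀ (φ : ℤ → ℝ) (e : ℝ),
      (∀ n : ℤ, -(φ (n+2) - 2 * φ (n+1) + φ n) + V0 n * φ n = e * φ (n+2)) →
      ∀ n : ℤ,
        -(WWd ψ j φ (n+2) / CCd ψ j (n+2) - 2 * (WWd ψ j φ (n+1) / CCd ψ j (n+1))
            + WWd ψ j φ n / CCd ψ j n)
          + V j n * (WWd ψ j φ n / CCd ψ j n)
        = e * (WWd ψ j φ (n+2) / CCd ψ j (n+2)) := by
    intro j
    induction j with
    | zero =>
      intro _ φ e hφ n
      simp only [ww_zero, cc_zero, div_one]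
      have hv0 : V 0 n = V0 n := by
        rw [hV 0 (by omega) n, Finset.Icc_eq_empty (by omega)]
        simp
      rw [hv0]
      exact hφ n
    | succ j ih =>
      intro hjk φ e hφ n
      have hCj : ∀ m : ℤ, CCd ψ j m ≠ 0 := fun m => hCne0 j (by omega) m
      have hCj1 : ∀ m : ℤ, CCd ψ (j+1) m ≠ 0 := fun m => hCne0 (j+1) (by omega) m
      have hu := ih (by omega) (ψ (j+1)) (ε (j+1)) (hψ (j+1) (by omega) (by omega))
      simp only [cc_succ] at hu
      have hΦ := ih (by omega) φ e hφ
      have hΨ : ∀ m : ℤ, WWd ψ (j+1) φ m / CCd ψ (j+1) m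
          = WWd ψ j φ (m+1) / CCd ψ j (m+1)
            - (CCd ψ (j+1) (m+1) / CCd ψ j (m+1)) / (CCd ψ (j+1) m / CCd ψ j m)
              * (WWd ψ j φ m / CCd ψ j m) := by
        intro m
        have hr := ww_rec ψ j φ m (hCj (m+1))
        have h1 : WWd ψ (j+1) φ m
            = (CCd ψ (j+1) m * WWd ψ j φ (m+1) - WWd ψ j φ m * CCd ψ (j+1) (m+1))
              / CCd ψ j (m+1) := by
          rw [eq_div_iff (hCj (m+1))]
          linear_combination hr
        rw [h1]
        have hz1 := hCj m
        have hz2 := hCj (m+1)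
        have hz3 := hCj1 m
        have hz4 := hCj1 (m+1)
        field_simp
      have harg1 : (n:ℤ)+1+1 = n+2 := by ring
      have harg2 : (n:ℤ)+1+2 = n+3 := by ring
      have harg3 : (n:ℤ)+2+1 = n+3 := by ring
      have hu1 := hu (n+1)
      rw [harg1, harg2] at hu1
      have hΦ1 := hΦ (n+1)
      rw [harg1, harg2] at hΦ1
      have hΨ0 := hΨ n
      have hΨ1 := hΨ (n+1)
      rw [harg1] at hΨ1
      have hΨ2 := hΨ (n+2)
      rw [harg3] at hΨ2
      have hfq : ∀ m : ℤ, (CCd ψ (j+1) (m+1) / CCd ψ j (m+1)) / (CCd ψ (j+1) m / CCd ψ j m)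
          = f (j+1) m + 1 := by
        intro m
        rw [hf (j+1) (by omega) (by omega) m]
        have hsub : j + 1 - 1 = j := by omega
        rw [hsub]
        simp only [hCC]
        have hz1 := hCj m
        have hz2 := hCj (m+1)
        have hz3 := hCj1 m
        have hz4 := hCj1 (m+1)
        field_simp
        ring
      have hfq1 := hfq (n+1)
      rw [harg1] at hfq1
      have hfq2 := hfq (n+2)
      rw [harg3] at hfq2
      have hpot : V (j+1) n = V j (n+1)
          - 2*((CCd ψ (j+1) (n+3) / CCd ψ j (n+3)) / (CCd ψ (j+1) (n+2) / CCd ψ j (n+2))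
             - (CCd ψ (j+1) (n+2) / CCd ψ j (n+2)) / (CCd ψ (j+1) (n+1) / CCd ψ j (n+1))) := by
        rw [hVrec j (by omega) n]
        linear_combination 2*hfq2 - 2*hfq1
      have HD := darboux_step (V j n) (V j (n+1)) e (ε (j+1))
        (CCd ψ (j+1) n / CCd ψ j n) (CCd ψ (j+1) (n+1) / CCd ψ j (n+1))
        (CCd ψ (j+1) (n+2) / CCd ψ j (n+2)) (CCd ψ (j+1) (n+3) / CCd ψ j (n+3))
        (WWd ψ j φ n / CCd ψ j n) (WWd ψ j φ (n+1) / CCd ψ j (n+1))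
        (WWd ψ j φ (n+2) / CCd ψ j (n+2)) (WWd ψ j φ (n+3) / CCd ψ j (n+3))
        (div_ne_zero (hCj1 n) (hCj n)) (div_ne_zero (hCj1 (n+1)) (hCj (n+1)))
        (div_ne_zero (hCj1 (n+2)) (hCj (n+2))) (hu n) hu1 (hΦ n) hΦ1
      rw [hΨ2, hΨ1, hΨ0, hpot]
      linear_combination HD
  -- part (B) preliminary: the telescoped sum identity
  have hB : ∀ i, 1 ≤ i → i ≤ k → ∀ n : ℤ,
      (∑ j ∈ Finset.Icc 1 i, f j (n + (i:ℤ) + 1 - (j:ℤ)))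
        = DDd ψ i (n+1) / CCd ψ i (n+1) - (i:ℝ) := by
    intro i
    induction i with
    | zero => intro h0; omega
    | succ i ihB =>
      intro h1 hik n
      rcases Nat.eq_zero_or_pos i with h0 | h0
      · subst h0
        simp only [Nat.zero_add]
        rw [Finset.Icc_self, Finset.sum_singleton]
        rw [show (n + ((1:ℕ):ℤ) + 1 - ((1:ℕ):ℤ)) = n+1 from by push_cast; ring]
        rw [hf 1 (by omega) (by omega) (n+1)]
        rw [show (1:ℕ) - 1 = 0 from by norm_num]
        simp only [hCC]
        rw [show ((n:ℤ)+1)+1 = n+2 from by ring]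
        simp only [cc_zero, dd_one, cc_one]
        rw [show ((n:ℤ)+1)+1 = n+2 from by ring]
        push_cast
        ring
      · rw [Finset.sum_Icc_succ_top (by omega : 1 ≤ i+1)]
        have e4 : (∑ j ∈ Finset.Icc 1 i, f j (n + ((i+1:ℕ):ℤ) + 1 - (j:ℤ)))
            = ∑ j ∈ Finset.Icc 1 i, f j ((n+1) + (i:ℤ) + 1 - (j:ℤ)) := by
          refine Finset.sum_congr rfl fun j _ => ?_
          congr 1; push_cast; ring
        rw [e4, ihB (by omega) (by omega) (n+1)]
        rw [show ((n:ℤ)+1)+1 = n+2 from by ring]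
        rw [show (n + ((i+1:ℕ):ℤ) + 1 - ((i+1:ℕ):ℤ)) = n+1 from by push_cast; ring]
        rw [hf (i+1) (by omega) (by omega) (n+1)]
        have hsub : i + 1 - 1 = i := by omega
        rw [hsub]
        simp only [hCC]
        rw [show ((n:ℤ)+1)+1 = n+2 from by ring]
        have hstar := star_eq ψ i h0 (n+1) (hCne0 i (by omega) ((n+1)+1))
        rw [show ((n:ℤ)+1)+1 = n+2 from by ring] at hstar
        have hd : DDd ψ (i+1) (n+1)
            = (CCd ψ (i+1) (n+1) * DDd ψ i (n+2) + CCd ψ i (n+1) * CCd ψ (i+1) (n+2))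
              / CCd ψ i (n+2) := by
          rw [eq_div_iff (hCne0 i (by omega) (n+2))]
          linear_combination hstar
        rw [hd]
        have hne1 : CCd ψ i (n+1) ≠ 0 := hCne0 i (by omega) (n+1)
        have hne2 : CCd ψ i (n+2) ≠ 0 := hCne0 i (by omega) (n+2)
        have hne3 : CCd ψ (i+1) (n+1) ≠ 0 := hCne0 (i+1) (by omega) (n+1)
        have hne4 : CCd ψ (i+1) (n+2) ≠ 0 := hCne0 (i+1) (by omega) (n+2)
        push_cast
        field_simp
        ring
  constructor
  · intro i h1 hk2 n
    have hkey := key (i-1) (by omega) (ψ i) (ε i) (hψ i h1 hk2) n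
    have hii : i - 1 + 1 = i := by omega
    have hw : ∀ x : ℤ, CCd ψ i x = WWd ψ (i-1) (ψ i) x := by
      intro x
      conv_lhs => rw [← hii]
      rw [← cc_succ, hii]
    simp only [hψh i h1 hk2, hCC, hw]
    linear_combination ((-1:ℝ))^(i-1) * hkey
  · intro i h1 hk2 n
    rw [hV i hk2 n]
    simp only [hB i h1 hk2]
    rw [show ((n:ℤ)+1)+1 = n+2 from by ring]
    simp only [hCC, hDDb i h1 hk2]
    ring
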